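/- Let N ≥ 1, let u, v : ℝ^N → [0,∞) be measurable, let H ⊂ ℝ^N be a closed halfspace, and let φ : ℝ → [0,∞) be convex with φ(0) = 0. Then ∫_{ℝ^N} φ(u^H − v^H) ≤ ∫_{ℝ^N} φ(u − v). In particular, for every 1 ≤ p < ∞ and u, v ∈ L^p(ℝ^N) nonnegative, ‖u^H − v^H‖_{L^p} ≤ ‖u − v‖_{L^p}. -/

import Mathlib

open MeasureTheory Filter

/-- Reflection across the boundary hyperplane `{x : ⟪a,x⟫ = b}` of the closed
halfspace `H = {x : ⟪a,x⟫ ≤ b}` (for `‖a‖ = 1`). -/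
noncomputable def reflectH {N : ℕ} (a : EuclideanSpace ℝ (Fin N)) (b : ℝ)
    (x : EuclideanSpace ℝ (Fin N)) : EuclideanSpace ℝ (Fin N) :=
  x - (2 * ((inner ℝ a x : ℝ) - b)) • a

/-- Polarization (two-point rearrangement) of `u` with respect to the closed halfspace
`H = {x : ⟪a,x⟫ ≤ b}` (for `‖a‖ = 1`). -/
noncomputable def polarization {N : ℕ} (a : EuclideanSpace ℝ (Fin N)) (b : ℝ)
    (u : EuclideanSpace ℝ (Fin N) → ℝ) (x : EuclideanSpace ℝ (Fin N)) : ℝ :=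
  if (inner ℝ a x : ℝ) ≤ b then max (u x) (u (reflectH a b x))
  else min (u x) (u (reflectH a b x))

section Aux

variable {N : ℕ} {a : EuclideanSpace ℝ (Fin N)} {b : ℝ}

lemma inner_reflectH (ha : ‖a‖ = 1) (b : ℝ) (x : EuclideanSpace ℝ (Fin N)) :
    (inner ℝ a (reflectH a b x) : ℝ) = 2 * b - inner ℝ a x := by
  have h1 : (inner ℝ a a : ℝ) = 1 := by
    rw [real_inner_self_eq_norm_sq, ha]; norm_num
  have h2 : (inner ℝ a (reflectH a b x) : ℝ)
      = (inner ℝ a x : ℝ) - (2 * ((inner ℝ a x : ℝ) - b)) * (inner ℝ a a : ℝ) := by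
    rw [reflectH, inner_sub_right, real_inner_smul_right]
  rw [h2, h1]
  ring

lemma reflectH_reflectH (ha : ‖a‖ = 1) (b : ℝ) (x : EuclideanSpace ℝ (Fin N)) :
    reflectH a b (reflectH a b x) = x := by
  have h := inner_reflectH ha b x
  simp only [reflectH] at h ⊢
  rw [h]
  module

lemma reflectH_eq (ha : ‖a‖ = 1) (b : ℝ) (x : EuclideanSpace ℝ (Fin N)) :
    reflectH a b x = (Submodule.reflection (Submodule.span ℝ {a})ᗮ) x + (2 * b) • a := by
  rw [Submodule.reflection_orthogonal_apply, Submodule.reflection_apply]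
  have h1 : ((Submodule.span ℝ {a}).starProjection x : EuclideanSpace ℝ (Fin N))
      = (inner ℝ a x : ℝ) • a := by
    rw [Submodule.starProjection_singleton, ha]
    norm_num
  rw [h1]
  simp only [reflectH]
  module

lemma reflectH_measurePreserving (ha : ‖a‖ = 1) (b : ℝ) :
    MeasurePreserving (reflectH a b) (volume : Measure (EuclideanSpace ℝ (Fin N))) volume := by
  have : reflectH a b = (fun y => y + (2 * b) • a) ∘ (Submodule.reflection (Submodule.span ℝ {a})ᗮ) := by
    funext x; exact reflectH_eq ha b x
  rw [this]
  exact (measurePreserving_add_right volume _).comp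
    (LinearIsometryEquiv.measurePreserving _)

lemma reflectH_continuous : Continuous (reflectH a b) := by
  have h : Continuous fun x : EuclideanSpace ℝ (Fin N) => (inner ℝ a x : ℝ) :=
    continuous_const.inner continuous_id
  exact continuous_id.sub ((continuous_const.mul (h.sub continuous_const)).smul
    continuous_const)

lemma polarization_measurable {u : EuclideanSpace ℝ (Fin N) → ℝ} (hum : Measurable u) :
    Measurable (polarization a b u) := by
  have hσ : Measurable (reflectH a b (N := N)) := reflectH_continuous.measurable
  have hs : MeasurableSet {x : EuclideanSpace ℝ (Fin N) | (inner ℝ a x : ℝ) ≤ b} :=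
    measurableSet_le ((continuous_const.inner continuous_id).measurable) measurable_const
  exact Measurable.ite hs (hum.max (hum.comp hσ)) (hum.min (hum.comp hσ))

/-- Convexity two-point inequality. -/
lemma convex_two_point {φ : ℝ → ℝ} (hφ : ConvexOn ℝ Set.univ φ) {m M x y : ℝ}
    (hx1 : m ≤ x) (hx2 : x ≤ M) (h : x + y = m + M) : φ x + φ y ≤ φ m + φ M := by
  rcases eq_or_lt_of_le (hx1.trans hx2) with hmM | hmM
  · have hxm : x = m := le_antisymm (hmM ▸ hx2) hx1
    have hyM : y = M := by linarith
    rw [hxm, hyM]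
  · set lam := (x - m) / (M - m) with hlam
    have hd : (0:ℝ) < M - m := by linarith
    have h0 : 0 ≤ lam := div_nonneg (by linarith) hd.le
    have h1 : lam ≤ 1 := by
      rw [hlam, div_le_one hd]; linarith
    have hx : x = (1 - lam) * m + lam * M := by
      have hl : lam * (M - m) = x - m := by rw [hlam, div_mul_cancel₀ _ hd.ne']
      linear_combination -hl
    have hy : y = lam * m + (1 - lam) * M := by linarith
    have hA := hφ.2 (Set.mem_univ m) (Set.mem_univ M) (by linarith : (0:ℝ) ≤ 1 - lam) h0
      (by ring)
    have hB := hφ.2 (Set.mem_univ m) (Set.mem_univ M) h0 (by linarith : (0:ℝ) ≤ 1 - lam)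
      (by ring)
    simp only [smul_eq_mul] at hA hB
    rw [hx, hy]
    linarith

lemma two_point {φ : ℝ → ℝ} (hφ : ConvexOn ℝ Set.univ φ) (s s' t t' : ℝ) :
    φ (max s s' - max t t') + φ (min s s' - min t t') ≤ φ (s - t) + φ (s' - t') := by
  set m := min (s - t) (s' - t') with hm
  set M := max (s - t) (s' - t') with hM
  have h1 : s - t ≤ M := le_max_left _ _
  have h2 : s' - t' ≤ M := le_max_right _ _
  have h3 : m ≤ s - t := min_le_left _ _
  have h4 : m ≤ s' - t' := min_le_right _ _
  have hA1 : m ≤ max s s' - max t t' := by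
    rcases max_choice s s' with h | h <;> rcases max_choice t t' with h' | h' <;>
      rw [h, h'] <;>
      linarith [le_max_left s s', le_max_right s s', le_max_left t t', le_max_right t t']
  have hA2 : max s s' - max t t' ≤ M := by
    rcases max_choice s s' with h | h <;> rcases max_choice t t' with h' | h' <;>
      rw [h, h'] <;>
      linarith [le_max_left s s', le_max_right s s', le_max_left t t', le_max_right t t']
  have hsum : (max s s' - max t t') + (min s s' - min t t') = m + M := by
    have e1 := min_add_max s s'
    have e2 := min_add_max t t'
    have e3 := min_add_max (s - t) (s' - t')
    linarith
  have key := convex_two_point hφ hA1 hA2 hsum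
  have hmM : φ m + φ M = φ (s - t) + φ (s' - t') := by
    rcases le_total (s - t) (s' - t') with h | h
    · rw [hm, hM, min_eq_left h, max_eq_right h]
    · rw [hm, hM, min_eq_right h, max_eq_left h]; ring
  linarith

/-- The pointwise pair inequality for polarization. -/
lemma pol_pair {φ : ℝ → ℝ} (hφ : ConvexOn ℝ Set.univ φ) (ha : ‖a‖ = 1)
    (u v : EuclideanSpace ℝ (Fin N) → ℝ) (x : EuclideanSpace ℝ (Fin N)) :
    φ (polarization a b u x - polarization a b v x) +
      φ (polarization a b u (reflectH a b x) - polarization a b v (reflectH a b x)) ≤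
    φ (u x - v x) + φ (u (reflectH a b x) - v (reflectH a b x)) := by
  set y := reflectH a b x with hy
  have hinv : reflectH a b y = x := reflectH_reflectH ha b x
  have hiy : (inner ℝ a y : ℝ) = 2 * b - inner ℝ a x := inner_reflectH ha b x
  rcases lt_trichotomy ((inner ℝ a x : ℝ)) b with h | h | h
  · have hx' : (inner ℝ a x : ℝ) ≤ b := h.le
    have hy' : ¬ ((inner ℝ a y : ℝ) ≤ b) := by rw [hiy]; push_neg; linarith
    simp only [polarization, if_pos hx', if_neg hy', hinv]
    have := two_point hφ (u x) (u y) (v x) (v y)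
    have e1 : min (u y) (u x) = min (u x) (u y) := min_comm _ _
    have e2 : min (v y) (v x) = min (v x) (v y) := min_comm _ _
    rw [e1, e2]
    linarith
  · have hyx : y = x := by
      rw [hy]
      simp [reflectH, h]
    have hx' : (inner ℝ a x : ℝ) ≤ b := h.le
    simp only [polarization, if_pos hx', hyx, ← hy, hinv, max_self]
    simp [hyx]
  · have hx' : ¬ ((inner ℝ a x : ℝ) ≤ b) := by push_neg; exact h
    have hy' : (inner ℝ a y : ℝ) ≤ b := by rw [hiy]; linarith
    simp only [polarization, if_neg hx', if_pos hy', hinv]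
    have := two_point hφ (u y) (u x) (v y) (v x)
    have e1 : min (u x) (u y) = min (u y) (u x) := min_comm _ _
    have e2 : min (v x) (v y) = min (v y) (v x) := min_comm _ _
    rw [e1, e2]
    linarith

/-- The integral inequality for a general nonnegative convex `φ`. -/
lemma lintegral_pol_le {φ : ℝ → ℝ} (hφ : ConvexOn ℝ Set.univ φ) (hφ0 : ∀ t, 0 ≤ φ t)
    (ha : ‖a‖ = 1) {u v : EuclideanSpace ℝ (Fin N) → ℝ}
    (hum : Measurable u) (hvm : Measurable v) :
    ∫⁻ x, ENNReal.ofReal (φ (polarization a b u x - polarization a b v x)) ≤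
      ∫⁻ x, ENNReal.ofReal (φ (u x - v x)) := by
  have hφc : Continuous φ := by
    rw [← continuousOn_univ]
    exact hφ.continuousOn isOpen_univ
  set σ := reflectH a b with hσdef
  have hσmp : MeasurePreserving σ (volume : Measure (EuclideanSpace ℝ (Fin N))) volume :=
    reflectH_measurePreserving ha b
  set g : EuclideanSpace ℝ (Fin N) → ENNReal :=
    fun x => ENNReal.ofReal (φ (polarization a b u x - polarization a b v x)) with hgdef
  set h : EuclideanSpace ℝ (Fin N) → ENNReal :=
    fun x => ENNReal.ofReal (φ (u x - v x)) with hhdef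
  have hgm : Measurable g :=
    ENNReal.measurable_ofReal.comp (hφc.measurable.comp
      ((polarization_measurable hum).sub (polarization_measurable hvm)))
  have hhm : Measurable h :=
    ENNReal.measurable_ofReal.comp (hφc.measurable.comp (hum.sub hvm))
  have hptwise : ∀ x, g x + g (σ x) ≤ h x + h (σ x) := by
    intro x
    rw [hgdef, hhdef]
    simp only
    rw [← ENNReal.ofReal_add (hφ0 _) (hφ0 _), ← ENNReal.ofReal_add (hφ0 _) (hφ0 _)]
    exact ENNReal.ofReal_le_ofReal (pol_pair hφ ha u v x)
  have hgσ : ∫⁻ x, g (σ x) = ∫⁻ x, g x := hσmp.lintegral_comp hgm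
  have hhσ : ∫⁻ x, h (σ x) = ∫⁻ x, h x := hσmp.lintegral_comp hhm
  have hmain : (∫⁻ x, g x) + (∫⁻ x, g x) ≤ (∫⁻ x, h x) + (∫⁻ x, h x) := by
    calc (∫⁻ x, g x) + (∫⁻ x, g x) = (∫⁻ x, g x) + ∫⁻ x, g (σ x) := by rw [hgσ]
    _ = ∫⁻ x, (g x + g (σ x)) := (lintegral_add_left hgm _).symm
    _ ≤ ∫⁻ x, (h x + h (σ x)) := lintegral_mono hptwise
    _ = (∫⁻ x, h x) + ∫⁻ x, h (σ x) := lintegral_add_left hhm _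
    _ = (∫⁻ x, h x) + (∫⁻ x, h x) := by rw [hhσ]
  rw [← two_mul, ← two_mul] at hmain
  exact (ENNReal.mul_le_mul_iff_right (by norm_num) (by norm_num)).mp hmain

end Aux

/-- For measurable nonnegative `u, v : ℝ^N → [0,∞)`, a closed halfspace
`H = {x : ⟪a,x⟫ ≤ b}` and a convex `φ : ℝ → [0,∞)` with `φ(0) = 0`, one has
`∫ φ(u^H − v^H) ≤ ∫ φ(u − v)`; in particular for `1 ≤ p < ∞` and `u, v ∈ L^p` nonnegative,
`‖u^H − v^H‖_{L^p} ≤ ‖u − v‖_{L^p}`. -/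
theorem statement13 {N : ℕ} (hN : 1 ≤ N)
    (u v : EuclideanSpace ℝ (Fin N) → ℝ) (hum : Measurable u) (hvm : Measurable v)
    (hu0 : ∀ x, 0 ≤ u x) (hv0 : ∀ x, 0 ≤ v x)
    (a : EuclideanSpace ℝ (Fin N)) (b : ℝ) (ha : ‖a‖ = 1)
    (φ : ℝ → ℝ) (hφ : ConvexOn ℝ Set.univ φ) (hφ0 : ∀ t, 0 ≤ φ t) (hφz : φ 0 = 0) :
    (∫⁻ x, ENNReal.ofReal (φ (polarization a b u x - polarization a b v x)) ≤
        ∫⁻ x, ENNReal.ofReal (φ (u x - v x))) ∧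
      ∀ p : ℝ, 1 ≤ p → MemLp u (ENNReal.ofReal p) volume →
        MemLp v (ENNReal.ofReal p) volume →
          eLpNorm (fun x => polarization a b u x - polarization a b v x)
              (ENNReal.ofReal p) volume ≤
            eLpNorm (fun x => u x - v x) (ENNReal.ofReal p) volume := by
  constructor
  · exact lintegral_pol_le hφ hφ0 ha hum hvm
  · intro p hp _ _
    have hp0 : (0:ℝ) < p := lt_of_lt_of_le one_pos hp
    -- the convex function |t|^p
    set ψ : ℝ → ℝ := fun t => |t| ^ p with hψdef
    have hψconv : ConvexOn ℝ Set.univ ψ := by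
      have habs : ConvexOn ℝ Set.univ (fun t : ℝ => |t|) := by
        exact convexOn_univ_norm (E := ℝ)
      have himg : (fun t : ℝ => |t|) '' Set.univ = Set.Ici (0:ℝ) := by
        ext y
        constructor
        · rintro ⟨x, -, rfl⟩; exact abs_nonneg x
        · intro hy; exact ⟨y, Set.mem_univ y, abs_of_nonneg hy⟩
      have hrpow : ConvexOn ℝ ((fun t : ℝ => |t|) '' Set.univ) (fun s : ℝ => s ^ p) := by
        rw [himg]; exact convexOn_rpow hp
      have hmono : MonotoneOn (fun s : ℝ => s ^ p) ((fun t : ℝ => |t|) '' Set.univ) := by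
        rw [himg]
        intro x hx y _ hxy
        exact Real.rpow_le_rpow hx hxy hp0.le
      exact hrpow.comp habs hmono
    have hψ0 : ∀ t, 0 ≤ ψ t := fun t => Real.rpow_nonneg (abs_nonneg t) p
    have hint := lintegral_pol_le (a := a) (b := b) hψconv hψ0 ha hum hvm
    have hq0 : ENNReal.ofReal p ≠ 0 := by
      simp [ENNReal.ofReal_eq_zero, not_le, hp0]
    have hqt : ENNReal.ofReal p ≠ ⊤ := ENNReal.ofReal_ne_top
    have hqr : (ENNReal.ofReal p).toReal = p := ENNReal.toReal_ofReal hp0.le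
    rw [eLpNorm_eq_lintegral_rpow_enorm_toReal hq0 hqt, eLpNorm_eq_lintegral_rpow_enorm_toReal hq0 hqt,
      hqr]
    have hconv : ∀ f : EuclideanSpace ℝ (Fin N) → ℝ, ∀ x,
        (‖f x‖ₑ ^ p) = ENNReal.ofReal (ψ (f x)) := by
      intro f x
      rw [hψdef]
      rw [← ofReal_norm_eq_enorm, Real.norm_eq_abs,
        ENNReal.ofReal_rpow_of_nonneg (abs_nonneg _) hp0.le]
    calc (∫⁻ x, ‖polarization a b u x - polarization a b v x‖ₑ ^ p) ^ (1 / p)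
        = (∫⁻ x, ENNReal.ofReal (ψ (polarization a b u x - polarization a b v x))) ^ (1 / p) := by
          congr 1
          exact lintegral_congr fun x =>
            hconv (fun y => polarization a b u y - polarization a b v y) x
      _ ≤ (∫⁻ x, ENNReal.ofReal (ψ (u x - v x))) ^ (1 / p) :=
          ENNReal.rpow_le_rpow hint (by positivity)
      _ = (∫⁻ x, ‖u x - v x‖ₑ ^ p) ^ (1 / p) := by
          congr 1; exact (lintegral_congr fun x => hconv (fun x => u x - v x) x).symm
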